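/- Let H be a Hopf algebra over a commutative ring k, A a k-algebra, and φ : H ⊗ A → A a map satisfying φ(h ⊗ ab) = Σ φ(h₍₁₎ ⊗ a) φ(h₍₂₎ ⊗ b) (condition (ii) of a twisted partial action). Define ψ : H ⊗ A → A ⊗ H by ψ(h ⊗ a) = Σ φ(h₍₁₎ ⊗ a) ⊗ h₍₂₎. Then ψ satisfies (μ_A ⊗ H) ∘ (A ⊗ ψ) ∘ (ψ ⊗ A) = ψ ∘ (H ⊗ μ_A); consequently the map ∇(a ⊗ h) = Σ a φ(h₍₁₎ ⊗ 1_A) ⊗ h₍₂₎ is idempotent on A ⊗ H. -/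
import Mathlib


open TensorProduct
set_option synthInstance.maxHeartbeats 1000000
set_option maxHeartbeats 1000000

variable {R A V H : Type*} [CommRing R] [Ring A] [Algebra R A]
  [AddCommGroup V] [Module R V] [Ring H] [HopfAlgebra R H]

/-- (μ_A ⊗ V) ∘ (A ⊗ ψ) ∘ (ψ ⊗ A) : (V ⊗ A) ⊗ A → A ⊗ V -/
noncomputable def psiMulLHS (ψ : V ⊗[R] A →ₗ[R] A ⊗[R] V) :
    (V ⊗[R] A) ⊗[R] A →ₗ[R] A ⊗[R] V :=
  TensorProduct.map (LinearMap.mul' R A) LinearMap.id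
    ∘ₗ (TensorProduct.assoc R A A V).symm.toLinearMap
    ∘ₗ LinearMap.lTensor A ψ
    ∘ₗ (TensorProduct.assoc R A V A).toLinearMap
    ∘ₗ LinearMap.rTensor A ψ

/-- ψ ∘ (V ⊗ μ_A) : (V ⊗ A) ⊗ A → A ⊗ V -/
noncomputable def psiMulRHS (ψ : V ⊗[R] A →ₗ[R] A ⊗[R] V) :
    (V ⊗[R] A) ⊗[R] A →ₗ[R] A ⊗[R] V :=
  ψ ∘ₗ LinearMap.lTensor V (LinearMap.mul' R A)
    ∘ₗ (TensorProduct.assoc R V A A).toLinearMap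

/-- ∇ = (μ_A ⊗ V) ∘ (A ⊗ ψ) ∘ (A ⊗ V ⊗ η_A) : A ⊗ V → A ⊗ V -/
noncomputable def nabla (ψ : V ⊗[R] A →ₗ[R] A ⊗[R] V) :
    A ⊗[R] V →ₗ[R] A ⊗[R] V :=
  TensorProduct.map (LinearMap.mul' R A) LinearMap.id
    ∘ₗ (TensorProduct.assoc R A A V).symm.toLinearMap
    ∘ₗ LinearMap.lTensor A ψ
    ∘ₗ LinearMap.lTensor A ((TensorProduct.mk R V A).flip 1)

/-- ψ(h ⊗ a) = Σ φ(h₍₁₎ ⊗ a) ⊗ h₍₂₎. -/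
noncomputable def psiOf (φ : H ⊗[R] A →ₗ[R] A) : H ⊗[R] A →ₗ[R] A ⊗[R] H :=
  LinearMap.rTensor H φ
    ∘ₗ (TensorProduct.assoc R H A H).symm.toLinearMap
    ∘ₗ LinearMap.lTensor H (TensorProduct.comm R H A).toLinearMap
    ∘ₗ (TensorProduct.assoc R H H A).toLinearMap
    ∘ₗ LinearMap.rTensor A (Coalgebra.comul : H →ₗ[R] H ⊗[R] H)

/-- σ(h ⊗ g) = Σ ω(h₍₁₎ ⊗ g₍₁₎) ⊗ h₍₂₎g₍₂₎. -/
noncomputable def sigmaOf (ω : H ⊗[R] H →ₗ[R] A) : H ⊗[R] H →ₗ[R] A ⊗[R] H :=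
  TensorProduct.map ω (LinearMap.mul' R H)
    ∘ₗ (TensorProduct.tensorTensorTensorComm R H H H H).toLinearMap
    ∘ₗ TensorProduct.map (Coalgebra.comul : H →ₗ[R] H ⊗[R] H)
        (Coalgebra.comul : H →ₗ[R] H ⊗[R] H)

/-- Condition (ii) of a twisted partial action:
φ(h ⊗ ab) = Σ φ(h₍₁₎ ⊗ a) φ(h₍₂₎ ⊗ b), as maps H ⊗ (A ⊗ A) → A. -/
def IsPartiallyMultiplicative (φ : H ⊗[R] A →ₗ[R] A) : Prop :=
  φ ∘ₗ LinearMap.lTensor H (LinearMap.mul' R A) =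
    LinearMap.mul' R A ∘ₗ TensorProduct.map φ φ
      ∘ₗ (TensorProduct.tensorTensorTensorComm R H H A A).toLinearMap
      ∘ₗ LinearMap.rTensor (A ⊗[R] A) (Coalgebra.comul : H →ₗ[R] H ⊗[R] H)

/-- If φ satisfies condition (ii) of a twisted partial action, then
ψ(h ⊗ a) = Σ φ(h₍₁₎ ⊗ a) ⊗ h₍₂₎ satisfies
(μ_A ⊗ H) ∘ (A ⊗ ψ) ∘ (ψ ⊗ A) = ψ ∘ (H ⊗ μ_A); consequently
∇(a ⊗ h) = Σ a φ(h₍₁₎ ⊗ 1_A) ⊗ h₍₂₎ is idempotent. -/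
noncomputable def Fphi (φ : H ⊗[R] A →ₗ[R] A) (a : A) : H →ₗ[R] A :=
  φ ∘ₗ (TensorProduct.mk R H A).flip a

lemma psiOf_tmul (φ : H ⊗[R] A →ₗ[R] A) (h : H) (a : A) :
    psiOf φ (h ⊗ₜ[R] a) =
      TensorProduct.map (Fphi φ a) LinearMap.id (Coalgebra.comul h) := by
  rw [psiOf]
  simp only [LinearMap.comp_apply, LinearMap.rTensor_tmul, LinearEquiv.coe_coe]
  generalize (Coalgebra.comul h : H ⊗[R] H) = x
  induction x using TensorProduct.induction_on with
  | zero => simp only [zero_tmul, map_zero]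
  | tmul h1 h2 =>
      simp only [TensorProduct.map_tmul, TensorProduct.assoc_tmul,
        LinearMap.lTensor_tmul, TensorProduct.assoc_symm_tmul, LinearMap.rTensor_tmul,
        TensorProduct.comm_tmul, LinearEquiv.coe_coe, LinearMap.id_coe, id_eq, Fphi,
        LinearMap.comp_apply, TensorProduct.mk_apply, LinearMap.flip_apply]
  | add x y hx hy => simp only [add_tmul, map_add, hx, hy]

lemma Fphi_mul (φ : H ⊗[R] A →ₗ[R] A) (hφ : IsPartiallyMultiplicative φ) (a b : A) :
    Fphi φ (a * b) =
      (LinearMap.mul' R A ∘ₗ TensorProduct.map (Fphi φ a) (Fphi φ b)) ∘ₗ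
        (Coalgebra.comul : H →ₗ[R] H ⊗[R] H) := by
  ext h1
  have hcf := LinearMap.congr_fun hφ (h1 ⊗ₜ[R] (a ⊗ₜ[R] b))
  simp only [LinearMap.comp_apply, LinearMap.lTensor_tmul, LinearMap.mul'_apply,
    LinearMap.rTensor_tmul, LinearEquiv.coe_coe] at hcf
  simp only [Fphi, LinearMap.comp_apply, LinearMap.flip_apply, TensorProduct.mk_apply]
  rw [hcf]
  generalize (Coalgebra.comul h1 : H ⊗[R] H) = x
  induction x using TensorProduct.induction_on with
  | zero => simp only [zero_tmul, map_zero]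
  | tmul h11 h12 =>
      simp only [TensorProduct.tensorTensorTensorComm_tmul, TensorProduct.map_tmul,
        LinearMap.mul'_apply, LinearMap.comp_apply, LinearMap.flip_apply,
        TensorProduct.mk_apply]
  | add x y hx hy => simp only [add_tmul, map_add, hx, hy]

lemma psiMul_key (φ : H ⊗[R] A →ₗ[R] A) (hφ : IsPartiallyMultiplicative φ)
    (h : H) (a b : A) :
    psiMulLHS (psiOf φ) ((h ⊗ₜ[R] a) ⊗ₜ[R] b) = psiOf φ (h ⊗ₜ[R] (a * b)) := by
  rw [psiMulLHS, psiOf_tmul, Fphi_mul φ hφ]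
  have hmapc : TensorProduct.map
      ((LinearMap.mul' R A ∘ₗ TensorProduct.map (Fphi φ a) (Fphi φ b)) ∘ₗ
        (Coalgebra.comul : H →ₗ[R] H ⊗[R] H)) (LinearMap.id (M := H)) =
      TensorProduct.map (LinearMap.mul' R A ∘ₗ TensorProduct.map (Fphi φ a) (Fphi φ b))
        LinearMap.id ∘ₗ
        LinearMap.rTensor H (Coalgebra.comul : H →ₗ[R] H ⊗[R] H) := by
    rw [LinearMap.rTensor, ← TensorProduct.map_comp]
    rfl
  rw [hmapc]
  simp only [LinearMap.comp_apply, LinearMap.rTensor_tmul, LinearEquiv.coe_coe]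
  rw [← Coalgebra.coassoc_symm_apply (R := R) h]
  rw [psiOf_tmul]
  generalize (Coalgebra.comul h : H ⊗[R] H) = x
  induction x using TensorProduct.induction_on with
  | zero => simp only [zero_tmul, map_zero]
  | tmul h1 h2 =>
      simp only [TensorProduct.map_tmul, LinearMap.id_coe, id_eq, TensorProduct.assoc_tmul,
        LinearEquiv.coe_coe, LinearMap.lTensor_tmul]
      rw [psiOf_tmul]
      generalize (Coalgebra.comul h2 : H ⊗[R] H) = y
      induction y using TensorProduct.induction_on with
      | zero => simp only [tmul_zero, map_zero]
      | tmul h21 h22 =>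
          simp only [TensorProduct.map_tmul, TensorProduct.assoc_tmul,
            TensorProduct.assoc_symm_tmul, LinearMap.lTensor_tmul, LinearMap.id_coe, id_eq,
            LinearMap.mul'_apply, LinearMap.comp_apply, LinearEquiv.coe_coe]
      | add y z hy hz =>
          simp only [tmul_add, map_add, add_tmul, hy, hz]
  | add x y hx hy => simp only [add_tmul, map_add, tmul_add, hx, hy]

lemma psiMul_eq (φ : H ⊗[R] A →ₗ[R] A) (hφ : IsPartiallyMultiplicative φ) :
    psiMulLHS (psiOf φ) = psiMulRHS (psiOf φ) := by
  apply TensorProduct.ext'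
  intro x b
  induction x using TensorProduct.induction_on with
  | zero => simp only [zero_tmul, map_zero]
  | tmul h a =>
      rw [psiMul_key φ hφ, psiMulRHS]
      simp only [LinearMap.comp_apply, LinearEquiv.coe_coe, TensorProduct.assoc_tmul,
        LinearMap.lTensor_tmul, LinearMap.mul'_apply]
  | add x y hx hy => simp only [add_tmul, map_add, hx, hy]

lemma nabla_tmul (φ : H ⊗[R] A →ₗ[R] A) (a : A) (h : H) :
    nabla (psiOf φ) (a ⊗ₜ[R] h) =
      LinearMap.rTensor H (LinearMap.mulLeft R a) (psiOf φ (h ⊗ₜ[R] (1 : A))) := by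
  rw [nabla]
  simp only [LinearMap.comp_apply, LinearMap.lTensor_tmul, TensorProduct.mk_apply,
    LinearMap.flip_apply, LinearEquiv.coe_coe]
  generalize psiOf φ (h ⊗ₜ[R] (1 : A)) = z
  induction z using TensorProduct.induction_on with
  | zero => simp only [tmul_zero, map_zero]
  | tmul u v =>
      simp only [LinearMap.lTensor_tmul, TensorProduct.assoc_symm_tmul,
        TensorProduct.map_tmul, LinearMap.mul'_apply, LinearMap.rTensor_tmul,
        LinearMap.mulLeft_apply, LinearMap.id_coe, id_eq]
  | add u v hu hv => simp only [tmul_add, map_add, hu, hv]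

lemma nabla_fix (φ : H ⊗[R] A →ₗ[R] A) (hφ : IsPartiallyMultiplicative φ)
    (y : H ⊗[R] A) : nabla (psiOf φ) (psiOf φ y) = psiOf φ y := by
  have h1 : nabla (psiOf φ) (psiOf φ y) = psiMulLHS (psiOf φ) (y ⊗ₜ[R] (1 : A)) := by
    rw [nabla, psiMulLHS]
    simp only [LinearMap.comp_apply, LinearMap.rTensor_tmul]
    congr 1
    congr 1
    congr 1
    generalize psiOf φ y = z
    induction z using TensorProduct.induction_on with
    | zero => simp only [zero_tmul, map_zero]
    | tmul u v =>
        simp only [LinearEquiv.coe_coe, TensorProduct.assoc_tmul, LinearMap.lTensor_tmul,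
          TensorProduct.mk_apply, LinearMap.flip_apply]
    | add u v hu hv => simp only [add_tmul, map_add, hu, hv]
  rw [h1, psiMul_eq φ hφ, psiMulRHS]
  simp only [LinearMap.comp_apply]
  congr 1
  clear h1
  induction y using TensorProduct.induction_on with
  | zero => simp only [zero_tmul, map_zero]
  | tmul h a =>
      simp only [LinearEquiv.coe_coe, TensorProduct.assoc_tmul, LinearMap.lTensor_tmul,
        LinearMap.mul'_apply, mul_one]
  | add u v hu hv => simp only [add_tmul, map_add, hu, hv]

theorem psiOf_mul_and_nabla_idempotent (φ : H ⊗[R] A →ₗ[R] A)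
    (hφ : IsPartiallyMultiplicative φ) :
    psiMulLHS (psiOf φ) = psiMulRHS (psiOf φ) ∧
      nabla (psiOf φ) ∘ₗ nabla (psiOf φ) = nabla (psiOf φ) := by
  refine ⟨psiMul_eq φ hφ, ?_⟩
  apply TensorProduct.ext'
  intro a h
  have hcomm : ∀ (x : A ⊗[R] H),
      nabla (psiOf φ) (LinearMap.rTensor H (LinearMap.mulLeft R a) x) =
        LinearMap.rTensor H (LinearMap.mulLeft R a) (nabla (psiOf φ) x) := by
    intro x
    induction x using TensorProduct.induction_on with
    | zero => simp only [map_zero]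
    | tmul c g =>
        rw [LinearMap.rTensor_tmul, LinearMap.mulLeft_apply, nabla_tmul, nabla_tmul,
          ← LinearMap.rTensor_comp_apply, ← LinearMap.mulLeft_mul]
    | add u v hu hv => simp only [map_add, hu, hv]
  rw [LinearMap.comp_apply, nabla_tmul, hcomm, nabla_fix φ hφ, ← nabla_tmul]
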